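/- Let n ≥ 3 and let N be a smooth and symmetric norm on ℝ^n. Then there exists R > 1 such that for every norm M on ℝ^n satisfying M(x) ≤ N(x) ≤ R·M(x) for all x ∈ ℝ^n, there exist n points in ℝ^n that are pairwise equidistant with respect to M; that is, the equilateral dimension of every normed space within Banach–Mazur distance R of (ℝ^n, N) is at least n. -/

import Mathlib

/-- `N` is a norm on `ℝ^n`. -/
def IsNorm {n : ℕ} (N : (Fin n → ℝ) → ℝ) : Prop :=
  (∀ x, N x = 0 ↔ x = 0) ∧
  (∀ (c : ℝ) (x : Fin n → ℝ), N (c • x) = |c| * N x) ∧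
  (∀ x y : Fin n → ℝ, N (x + y) ≤ N x + N y)

/-- `N` is permutation-invariant. -/
def PermInvariant {n : ℕ} (N : (Fin n → ℝ) → ℝ) : Prop :=
  ∀ (σ : Equiv.Perm (Fin n)) (x : Fin n → ℝ), N (fun i => x (σ i)) = N x

/-- `N` is 1-unconditional. -/
def Unconditional {n : ℕ} (N : (Fin n → ℝ) → ℝ) : Prop :=
  ∀ ε : Fin n → ℝ, (∀ i, ε i = 1 ∨ ε i = -1) →
    ∀ x : Fin n → ℝ, N (fun i => ε i * x i) = N x

/-- `N` is smooth: at every point of the unit sphere there is exactly one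
supporting functional. -/
def SmoothNorm {n : ℕ} (N : (Fin n → ℝ) → ℝ) : Prop :=
  ∀ x : Fin n → ℝ, N x = 1 →
    ∃! f : (Fin n → ℝ) →ₗ[ℝ] ℝ, f x = 1 ∧ ∀ y : Fin n → ℝ, N y ≤ 1 → f y ≤ 1

namespace EqAux

variable {n : ℕ}

/-- basis-like vectors -/
def ee (i : Fin n) : Fin n → ℝ := fun m => if m = i then 1 else 0

lemma ee_apply (i m : Fin n) : ee i m = if m = i then 1 else 0 := rfl

lemma isnorm_nonneg {N : (Fin n → ℝ) → ℝ} (hN : IsNorm N) (x : Fin n → ℝ) : 0 ≤ N x := by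
  have h1 : N ((-1 : ℝ) • x) = N x := by rw [hN.2.1]; simp
  have h2 : N (x + (-1 : ℝ) • x) ≤ N x + N ((-1 : ℝ) • x) := hN.2.2 _ _
  have h3 : x + (-1 : ℝ) • x = 0 := by simp
  have h4 : N 0 = 0 := (hN.1 0).2 rfl
  rw [h3, h4, h1] at h2
  linarith

lemma isnorm_neg {N : (Fin n → ℝ) → ℝ} (hN : IsNorm N) (x : Fin n → ℝ) : N (-x) = N x := by
  have := hN.2.1 (-1) x
  simpa using this

lemma isnorm_sub_le {N : (Fin n → ℝ) → ℝ} (hN : IsNorm N) (x y : Fin n → ℝ) :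
    N x - N y ≤ N (x - y) := by
  have := hN.2.2 (x - y) y
  simp only [sub_add_cancel] at this
  linarith

lemma decomp (w : Fin n → ℝ) : w = ∑ m, w m • ee m := by
  funext z
  simp only [Finset.sum_apply, Pi.smul_apply, ee, smul_eq_mul, mul_ite, mul_one, mul_zero]
  rw [Finset.sum_ite_eq]
  simp

lemma lin_repr (g : (Fin n → ℝ) →ₗ[ℝ] ℝ) (w : Fin n → ℝ) :
    g w = ∑ m, w m * g (ee m) := by
  conv_lhs => rw [decomp w]
  rw [map_sum]
  simp [smul_eq_mul]

lemma isnorm_le_K {N : (Fin n → ℝ) → ℝ} (hN : IsNorm N) (x : Fin n → ℝ) :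
    N x ≤ (∑ m, N (ee m)) * ‖x‖ := by
  have h0 : N 0 = 0 := (hN.1 0).2 rfl
  calc N x = N (∑ m, x m • ee m) := by rw [← decomp]
    _ ≤ ∑ m, N (x m • ee m) := by
        classical
        refine Finset.le_sum_of_subadditive N h0.le hN.2.2 _ _
    _ ≤ ∑ m, N (ee m) * ‖x‖ := by
        refine Finset.sum_le_sum fun m _ => ?_
        rw [hN.2.1]
        have h1 : |x m| ≤ ‖x‖ := by simpa using norm_le_pi_norm x m
        have h2 : 0 ≤ N (ee m) := isnorm_nonneg hN _
        calc |x m| * N (ee m) ≤ ‖x‖ * N (ee m) :=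
              mul_le_mul_of_nonneg_right h1 h2
          _ = N (ee m) * ‖x‖ := mul_comm _ _
    _ = (∑ m, N (ee m)) * ‖x‖ := by rw [Finset.sum_mul]

/-- Hahn-Banach: supporting functional of a norm at a nonzero point. -/
lemma exists_support {M : (Fin n → ℝ) → ℝ} (hM : IsNorm M) {v : Fin n → ℝ} (hv : v ≠ 0) :
    ∃ g : (Fin n → ℝ) →ₗ[ℝ] ℝ, (∀ z, g z ≤ M z) ∧ g v = M v := by
  classical
  set f : (Fin n → ℝ) →ₗ.[ℝ] ℝ := LinearPMap.mkSpanSingleton v (M v) hv with hf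
  have hfle : ∀ x : f.domain, f x ≤ M x := by
    rintro ⟨x, hx⟩
    obtain ⟨c, rfl⟩ := Submodule.mem_span_singleton.1 hx
    have : f ⟨c • v, hx⟩ = c • M v := LinearPMap.mkSpanSingleton'_apply _ _ _ c _
    rw [this, hM.2.1, smul_eq_mul]
    have := isnorm_nonneg hM v
    nlinarith [le_abs_self c]
  obtain ⟨g, hg1, hg2⟩ := exists_extension_of_le_sublinear f M
    (fun c hc x => by rw [hM.2.1, abs_of_pos hc]) hM.2.2 hfle
  refine ⟨g, hg2, ?_⟩
  have hv' : v ∈ Submodule.span ℝ ({v} : Set (Fin n → ℝ)) := Submodule.mem_span_singleton_self v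
  have := hg1 ⟨v, hv'⟩
  rw [this]
  exact LinearPMap.mkSpanSingleton_apply ℝ ℝ hv (M v)

lemma ee_sub_ne_zero {i j : Fin n} (hij : i ≠ j) : ee i - ee j ≠ 0 := by
  intro h
  have := congrFun h i
  simp [ee, hij, Ne.symm hij] at this

/-- the norm of `e i - e j` does not depend on the pair. -/
lemma perm_c {N : (Fin n → ℝ) → ℝ} (hN : IsNorm N) (hperm : PermInvariant N)
    {i j i' j' : Fin n} (hij : i ≠ j) (hij' : i' ≠ j') :
    N (ee i - ee j) = N (ee i' - ee j') := by
  classical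
  set τ : Equiv.Perm (Fin n) := Equiv.swap i' i with hτ
  have hτi : τ i' = i := Equiv.swap_apply_left _ _
  set j'' : Fin n := τ.symm j with hj''
  have hτj : τ j'' = j := Equiv.apply_symm_apply _ _
  have hi'j'' : i' ≠ j'' := by
    intro h
    rw [h, hτj] at hτi
    exact hij hτi.symm
  set σ : Equiv.Perm (Fin n) := (Equiv.swap j' j'').trans τ with hσ
  have hσi : σ i' = i := by
    simp only [hσ, Equiv.trans_apply]
    rw [Equiv.swap_apply_of_ne_of_ne hij' hi'j'', hτi]
  have hσj : σ j' = j := by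
    simp only [hσ, Equiv.trans_apply]
    rw [Equiv.swap_apply_left, hτj]
  have key := hperm σ (ee i - ee j)
  have : (fun m => (ee i - ee j) (σ m)) = ee i' - ee j' := by
    funext m
    have e1 : (σ m = i) ↔ (m = i') :=
      ⟨fun h => σ.injective (h.trans hσi.symm), fun h => by rw [h, hσi]⟩
    have e2 : (σ m = j) ↔ (m = j') :=
      ⟨fun h => σ.injective (h.trans hσj.symm), fun h => by rw [h, hσj]⟩
    simp only [Pi.sub_apply, ee]
    rw [if_congr e1 rfl rfl, if_congr e2 rfl rfl]
  rw [this] at key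
  exact key.symm

/-- The functional `x ↦ (c/2)(x i - x j)` is dominated by `N`. -/
lemma phi_le {N : (Fin n → ℝ) → ℝ} (hN : IsNorm N) (hperm : PermInvariant N)
    (huncond : Unconditional N) {i j : Fin n} (hij : i ≠ j) (x : Fin n → ℝ) :
    N (ee i - ee j) / 2 * (x i - x j) ≤ N x := by
  classical
  set c : ℝ := N (ee i - ee j) with hc
  have hc0 : 0 ≤ c := isnorm_nonneg hN _
  set a : ℝ := x i with ha
  set b : ℝ := x j with hb
  -- step 1 : kill the other coordinates
  set y : Fin n → ℝ := fun m => if m = i ∨ m = j then x m else 0 with hy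
  have hyx : N y ≤ N x := by
    set ε : Fin n → ℝ := fun m => if m = i ∨ m = j then 1 else -1 with hε
    have hεok : ∀ m, ε m = 1 ∨ ε m = -1 := by
      intro m; simp only [hε]; split_ifs <;> simp
    have hNx' : N (fun m => ε m * x m) = N x := huncond ε hεok x
    have hy2 : y = (1/2 : ℝ) • (x + fun m => ε m * x m) := by
      funext m
      simp only [hy, hε, Pi.smul_apply, Pi.add_apply, smul_eq_mul]
      split_ifs <;> ring
    calc N y = |1/2| * N (x + fun m => ε m * x m) := by rw [hy2, hN.2.1]
      _ ≤ |1/2| * (N x + N (fun m => ε m * x m)) := by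
          have := hN.2.2 x (fun m => ε m * x m)
          have h2 : (0:ℝ) ≤ |1/2| := abs_nonneg _
          nlinarith
      _ = N x := by rw [hNx']; rw [abs_of_pos (by norm_num : (0:ℝ) < 1/2)]; ring
  -- step 2 : flip signs
  set u : Fin n → ℝ := |a| • ee i - |b| • ee j with hu
  have hNu : N u = N y := by
    set ε : Fin n → ℝ := fun m => if m = i then (if a < 0 then -1 else 1)
      else if m = j then (if 0 < b then -1 else 1) else 1 with hε
    have hεok : ∀ m, ε m = 1 ∨ ε m = -1 := by
      intro m; simp only [hε]; split_ifs <;> simp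
    have : (fun m => ε m * y m) = u := by
      funext m
      simp only [hε, hy, hu, Pi.sub_apply, Pi.smul_apply, ee, smul_eq_mul]
      by_cases hmi : m = i
      · subst hmi
        simp only [if_pos rfl, if_pos (Or.inl rfl), if_neg hij]
        rcases lt_or_ge a 0 with h | h
        · rw [if_pos h, abs_of_neg h]; simp only [true_or, or_true, if_true]; ring
        · rw [if_neg (not_lt.2 h), abs_of_nonneg h]; simp only [true_or, or_true, if_true]; ring
      · by_cases hmj : m = j
        · subst hmj
          simp only [if_neg hmi, if_pos rfl, if_pos (Or.inr rfl), if_neg (Ne.symm hij)]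
          rcases lt_or_ge 0 b with h | h
          · rw [if_pos h, abs_of_pos h]; simp only [true_or, or_true, if_true]; ring
          · rw [if_neg (not_lt.2 h), abs_of_nonpos h]; simp only [true_or, or_true, if_true]; ring
        · simp only [if_neg hmi, if_neg hmj, if_neg (by tauto : ¬(m = i ∨ m = j))]
          ring
    rw [← this]
    exact huncond ε hεok y
  -- step 3 : swap
  set w : Fin n → ℝ := |b| • ee i - |a| • ee j with hw
  have hNw : N w = N u := by
    have key := hperm (Equiv.swap i j) u
    have : (fun m => u (Equiv.swap i j m)) = -w := by
      funext m
      simp only [hu, hw, Pi.neg_apply, Pi.sub_apply, Pi.smul_apply, ee, smul_eq_mul]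
      by_cases hmi : m = i
      · subst hmi
        rw [Equiv.swap_apply_left]
        simp [hij, Ne.symm hij]
      · by_cases hmj : m = j
        · subst hmj
          rw [Equiv.swap_apply_right]
          simp [hij, Ne.symm hij]
        · rw [Equiv.swap_apply_of_ne_of_ne hmi hmj]
          simp [hmi, hmj]
    rw [this, isnorm_neg hN] at key
    exact key
  -- step 4 : add
  have hsum : u + w = (|a| + |b|) • (ee i - ee j) := by
    funext m
    simp only [hu, hw, Pi.add_apply, Pi.sub_apply, Pi.smul_apply, ee, smul_eq_mul]
    split_ifs <;> ring
  have hNsum : N (u + w) = (|a| + |b|) * c := by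
    rw [hsum, hN.2.1, abs_of_nonneg (by positivity)]
  have h2Nu : (|a| + |b|) * c ≤ 2 * N u := by
    have h := hN.2.2 u w
    rw [hNsum] at h
    linarith [hNw]
  have hxy : x i - x j ≤ |a| + |b| := by
    have h1 := le_abs_self a
    have h2 := neg_abs_le b
    rw [ha] at h1; rw [hb] at h2
    linarith
  have t1 : c / 2 * (x i - x j) ≤ (|a| + |b|) * c / 2 := by nlinarith
  linarith

lemma isnorm_abs_sub {N : (Fin n → ℝ) → ℝ} (hN : IsNorm N) (x y : Fin n → ℝ) :
    |N x - N y| ≤ (∑ m, N (ee m)) * ‖x - y‖ := by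
  rw [abs_le]
  constructor
  · have h1 := isnorm_sub_le hN y x
    have h2 := isnorm_le_K hN (y - x)
    have : ‖y - x‖ = ‖x - y‖ := by rw [← norm_neg]; congr 1; abel
    rw [this] at h2
    linarith
  · have h1 := isnorm_sub_le hN x y
    have h2 := isnorm_le_K hN (x - y)
    linarith

lemma isnorm_pos {N : (Fin n → ℝ) → ℝ} (hN : IsNorm N) {x : Fin n → ℝ} (hx : x ≠ 0) :
    0 < N x :=
  lt_of_le_of_ne (isnorm_nonneg hN x) fun h => hx ((hN.1 x).1 h.symm)

/-- Key rigidity: any functional dominated by `N` which almost supports `N`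
near `e i - e j` is uniformly close to the unique support functional there. -/
lemma near_support {N : (Fin n → ℝ) → ℝ} (hN : IsNorm N) (hperm : PermInvariant N)
    (huncond : Unconditional N) (hsmooth : SmoothNorm N)
    {i j : Fin n} (hij : i ≠ j) {η : ℝ} (hη : 0 < η) :
    ∃ γ : ℝ, 0 < γ ∧ ∀ (g : (Fin n → ℝ) →ₗ[ℝ] ℝ) (v : Fin n → ℝ),
      (∀ z, g z ≤ N z) → ‖v - (ee i - ee j)‖ ≤ γ → (1 - γ) * N v ≤ g v →
      ∀ w, |g w - N (ee i - ee j) / 2 * (w i - w j)| ≤ η * ‖w‖ := by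
  classical
  set x₀ : Fin n → ℝ := ee i - ee j with hx₀
  have hx0ne : x₀ ≠ 0 := ee_sub_ne_zero hij
  set c : ℝ := N x₀ with hcdef
  have hc0 : 0 < c := isnorm_pos hN hx0ne
  set K : ℝ := ∑ m, N (ee m) with hK
  by_contra hcon
  push_neg at hcon
  have h : ∀ k : ℕ, ∃ (g : (Fin n → ℝ) →ₗ[ℝ] ℝ) (v : Fin n → ℝ),
      (∀ z, g z ≤ N z) ∧ ‖v - x₀‖ ≤ 1/((k:ℝ)+1) ∧ (1 - 1/((k:ℝ)+1)) * N v ≤ g v ∧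
      ∃ w, η * ‖w‖ < |g w - c / 2 * (w i - w j)| := by
    intro k
    exact hcon (1/((k:ℝ)+1)) (by positivity)
  choose g v h1 h2 h3 w h4 using h
  -- coordinate vectors of the functionals
  set G : ℕ → (Fin n → ℝ) := fun k m => g k (ee m) with hG
  have hGbdd : ∀ k, G k ∈ Metric.closedBall (0 : Fin n → ℝ) K := by
    intro k
    rw [Metric.mem_closedBall, dist_zero_right]
    have hK0 : (0:ℝ) ≤ K := Finset.sum_nonneg fun m _ => isnorm_nonneg hN _
    rw [pi_norm_le_iff_of_nonneg hK0]
    intro m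
    rw [Real.norm_eq_abs, abs_le]
    have hup := h1 k (ee m)
    have hdn := h1 k (-(ee m))
    rw [map_neg, isnorm_neg hN] at hdn
    have hsingle : N (ee m) ≤ K := by
      rw [hK]
      exact Finset.single_le_sum (f := fun m => N (ee m))
        (fun m _ => isnorm_nonneg hN _) (Finset.mem_univ m)
    constructor <;> [linarith; linarith]
  obtain ⟨a, -, ψ, hψ, hGa⟩ :=
    tendsto_subseq_of_bounded Metric.isBounded_closedBall (x := G) hGbdd
  have hacoord : ∀ m, Filter.Tendsto (fun k => G (ψ k) m) Filter.atTop (nhds (a m)) :=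
    fun m => (tendsto_pi_nhds.1 hGa) m
  -- the limit functional
  set glim : (Fin n → ℝ) →ₗ[ℝ] ℝ := ∑ m, a m • (LinearMap.proj m) with hglim
  have hglim_apply : ∀ z, glim z = ∑ m, z m * a m := by
    intro z
    rw [hglim]
    simp only [LinearMap.coe_sum, Finset.sum_apply, LinearMap.smul_apply,
      LinearMap.proj_apply, smul_eq_mul]
    exact Finset.sum_congr rfl fun m _ => mul_comm _ _
  have happly : ∀ k z, g k z = ∑ m, z m * G k m := fun k z => lin_repr (g k) z
  have htend : ∀ z, Filter.Tendsto (fun k => g (ψ k) z) Filter.atTop (nhds (glim z)) := by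
    intro z
    rw [hglim_apply]
    simp only [happly]
    exact tendsto_finset_sum _ fun m _ => (hacoord m).const_mul (z m)
  -- v (ψ k) → x₀ and N (v (ψ k)) → c
  have hvnorm : ∀ k, ‖v (ψ k) - x₀‖ ≤ 1/((k:ℝ)+1) := by
    intro k
    refine (h2 (ψ k)).trans ?_
    have : (k:ℝ) + 1 ≤ (ψ k : ℝ) + 1 := by
      have hh : k ≤ ψ k := hψ.le_apply
      exact_mod_cast by omega
    exact one_div_le_one_div_of_le (by positivity) this
  have hone : Filter.Tendsto (fun k : ℕ => 1/((k:ℝ)+1)) Filter.atTop (nhds 0) :=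
    tendsto_one_div_add_atTop_nhds_zero_nat
  have hvtend : Filter.Tendsto (fun k => v (ψ k)) Filter.atTop (nhds x₀) := by
    rw [tendsto_iff_dist_tendsto_zero]
    refine squeeze_zero (fun k => dist_nonneg) (fun k => ?_) hone
    rw [dist_eq_norm]; exact hvnorm k
  have hNtend : Filter.Tendsto (fun k => N (v (ψ k))) Filter.atTop (nhds c) := by
    rw [tendsto_iff_dist_tendsto_zero]
    have hlim : Filter.Tendsto (fun k : ℕ => K * (1/((k:ℝ)+1))) Filter.atTop (nhds 0) := by
      have := hone.const_mul K
      rwa [mul_zero] at this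
    refine squeeze_zero (fun k => dist_nonneg) (fun k => ?_) hlim
    rw [Real.dist_eq]
    refine (isnorm_abs_sub hN _ _).trans ?_
    have hK0 : (0:ℝ) ≤ K := Finset.sum_nonneg fun m _ => isnorm_nonneg hN _
    exact mul_le_mul_of_nonneg_left (hvnorm k) hK0
  -- the limit functional is dominated by N and attains N at x₀
  have hglimle : ∀ z, glim z ≤ N z := fun z =>
    le_of_tendsto (htend z) (Filter.Eventually.of_forall fun k => h1 (ψ k) z)
  have hglimx₀ : glim x₀ = c := by
    have hA : Filter.Tendsto (fun k => g (ψ k) (v (ψ k))) Filter.atTop (nhds (glim x₀)) := by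
      have he : ∀ k, g (ψ k) (v (ψ k)) = ∑ m, v (ψ k) m * G (ψ k) m := fun k => happly _ _
      rw [hglim_apply]
      simp only [he]
      refine tendsto_finset_sum _ fun m _ => Filter.Tendsto.mul ?_ (hacoord m)
      exact (tendsto_pi_nhds.1 hvtend) m
    have hB : Filter.Tendsto (fun k => (1 - 1/((ψ k : ℝ)+1)) * N (v (ψ k)))
        Filter.atTop (nhds c) := by
      have hψ0 : Filter.Tendsto (fun k => 1/((ψ k:ℝ)+1)) Filter.atTop (nhds 0) :=
        hone.comp hψ.tendsto_atTop
      have := ((tendsto_const_nhds (x := (1:ℝ))).sub hψ0).mul hNtend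
      simpa using this
    have hle1 : c ≤ glim x₀ :=
      le_of_tendsto_of_tendsto' hB hA (fun k => h3 (ψ k))
    exact le_antisymm (hglimle x₀) hle1
  -- identify the limit with the explicit support functional via smoothness
  set xhat : Fin n → ℝ := c⁻¹ • x₀ with hxhatdef
  have hxhat : N xhat = 1 := by
    rw [hxhatdef, hN.2.1, abs_of_pos (inv_pos.2 hc0), ← hcdef, inv_mul_cancel₀ hc0.ne']
  obtain ⟨f, -, huniq⟩ := hsmooth xhat hxhat
  set φ : (Fin n → ℝ) →ₗ[ℝ] ℝ :=
    (c/2) • ((LinearMap.proj i : (Fin n → ℝ) →ₗ[ℝ] ℝ) - LinearMap.proj j) with hφ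
  have hφ_apply : ∀ z, φ z = c/2 * (z i - z j) := by
    intro z
    simp only [hφ, LinearMap.smul_apply, LinearMap.sub_apply, LinearMap.proj_apply,
      smul_eq_mul]
  have hφle : ∀ z, φ z ≤ N z := by
    intro z; rw [hφ_apply]; exact phi_le hN hperm huncond hij z
  have hx₀i : x₀ i = 1 := by simp [hx₀, ee, hij]
  have hx₀j : x₀ j = -1 := by simp [hx₀, ee, Ne.symm hij]
  have hglimeq : glim = f := by
    refine huniq glim ⟨?_, fun y hy => (hglimle y).trans hy⟩
    rw [hxhatdef, map_smul, smul_eq_mul, hglimx₀, inv_mul_cancel₀ hc0.ne']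
  have hφeq : φ = f := by
    refine huniq φ ⟨?_, fun y hy => (hφle y).trans hy⟩
    rw [hxhatdef, map_smul, smul_eq_mul, hφ_apply, hx₀i, hx₀j]
    field_simp
    norm_num
  have hgphi : ∀ z, c/2 * (z i - z j) = glim z := by
    intro z; rw [hglimeq, ← hφeq, hφ_apply]
  -- contradiction
  have hsum0 : Filter.Tendsto (fun k => ∑ m, |G (ψ k) m - a m|) Filter.atTop (nhds 0) := by
    have h0 : (0:ℝ) = ∑ _m : Fin n, (0:ℝ) := by simp
    rw [h0]
    refine tendsto_finset_sum _ fun m _ => ?_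
    have := ((hacoord m).sub (tendsto_const_nhds (x := a m))).abs
    simpa using this
  have hev : ∀ᶠ k in Filter.atTop, (∑ m, |G (ψ k) m - a m|) < η :=
    hsum0.eventually_lt_const hη
  obtain ⟨k, hk⟩ := hev.exists
  set w0 := w (ψ k) with hw0
  have hbound : |g (ψ k) w0 - c/2 * (w0 i - w0 j)| ≤ (∑ m, |G (ψ k) m - a m|) * ‖w0‖ := by
    rw [hgphi w0, happly, hglim_apply, ← Finset.sum_sub_distrib]
    refine (Finset.abs_sum_le_sum_abs _ _).trans ?_
    rw [Finset.sum_mul]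
    refine Finset.sum_le_sum fun m _ => ?_
    have he : w0 m * G (ψ k) m - w0 m * a m = (G (ψ k) m - a m) * w0 m := by ring
    rw [he, abs_mul]
    exact mul_le_mul_of_nonneg_left (by simpa using norm_le_pi_norm w0 m) (abs_nonneg _)
  have hbad := h4 (ψ k)
  have hfin : (∑ m, |G (ψ k) m - a m|) * ‖w0‖ ≤ η * ‖w0‖ :=
    mul_le_mul_of_nonneg_right hk.le (norm_nonneg _)
  rw [← hw0] at hbad
  linarith

lemma entry_abs_le (t : Fin n → Fin n → ℝ) (i m : Fin n) : |t i m| ≤ ‖t‖ := by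
  have h1 : ‖t i m‖ ≤ ‖t i‖ := norm_le_pi_norm (t i) m
  have h2 : ‖t i‖ ≤ ‖t‖ := norm_le_pi_norm t i
  simpa using h1.trans h2

end EqAux

open EqAux

set_option maxHeartbeats 1600000 in
/-- For a smooth and symmetric norm `N` on `ℝ^n` (`n ≥ 3`) there exists `R > 1` such that
every norm `M` within (multiplicative) Banach–Mazur distance `R` of `N` admits `n`
pairwise equidistant points. -/
theorem equilateral_near_smooth_symmetric (n : ℕ) (hn : 3 ≤ n)
    (N : (Fin n → ℝ) → ℝ) (hN : IsNorm N) (hperm : PermInvariant N)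
    (huncond : Unconditional N) (hsmooth : SmoothNorm N) :
    ∃ R : ℝ, 1 < R ∧
      ∀ M : (Fin n → ℝ) → ℝ, IsNorm M →
        (∀ x : Fin n → ℝ, M x ≤ N x ∧ N x ≤ R * M x) →
        ∃ (p : Fin n → (Fin n → ℝ)) (d : ℝ), 0 < d ∧
          ∀ i j : Fin n, i ≠ j → M (p i - p j) = d := by
  classical
  haveI : Nonempty (Fin n) := ⟨⟨0, by omega⟩⟩
  set i0 : Fin n := ⟨0, by omega⟩ with hi0
  set i1 : Fin n := ⟨1, by omega⟩ with hi1
  have hne01 : i0 ≠ i1 := by simp [hi0, hi1, Fin.ext_iff]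
  set c : ℝ := N (ee i0 - ee i1) with hcdef
  have hc0 : 0 < c := isnorm_pos hN (ee_sub_ne_zero hne01)
  have hcc : ∀ i j : Fin n, i ≠ j → N (ee i - ee j) = c :=
    fun i j h => perm_c hN hperm h hne01
  set η : ℝ := c / 8 with hηdef
  have hη : 0 < η := by positivity
  -- a uniform γ working for all pairs
  have hpair : ∀ pr : Fin n × Fin n, ∃ γ : ℝ, 0 < γ ∧ (pr.1 ≠ pr.2 →
      ∀ (g : (Fin n → ℝ) →ₗ[ℝ] ℝ) (v : Fin n → ℝ),
      (∀ z, g z ≤ N z) → ‖v - (ee pr.1 - ee pr.2)‖ ≤ γ → (1 - γ) * N v ≤ g v →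
      ∀ w, |g w - N (ee pr.1 - ee pr.2) / 2 * (w pr.1 - w pr.2)| ≤ η * ‖w‖) := by
    intro pr
    by_cases h : pr.1 ≠ pr.2
    · obtain ⟨γ, hγ0, hγ⟩ := near_support hN hperm huncond hsmooth h hη
      exact ⟨γ, hγ0, fun _ => hγ⟩
    · exact ⟨1, one_pos, fun h' => absurd h' h⟩
  choose γf hγf0 hγfP using hpair
  set γ : ℝ := min (1/4) (Finset.univ.inf' Finset.univ_nonempty γf) with hγdef
  have hγ0 : 0 < γ := by
    rw [hγdef]
    refine lt_min (by norm_num) ?_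
    rw [Finset.lt_inf'_iff]
    exact fun b _ => hγf0 b
  have hγle : ∀ pr, γ ≤ γf pr := fun pr =>
    (min_le_right _ _).trans (Finset.inf'_le _ (Finset.mem_univ pr))
  have hγ14 : γ ≤ 1/4 := min_le_left _ _
  have hKEY : ∀ i j : Fin n, i ≠ j → ∀ (g : (Fin n → ℝ) →ₗ[ℝ] ℝ) (v : Fin n → ℝ),
      (∀ z, g z ≤ N z) → ‖v - (ee i - ee j)‖ ≤ γ → (1 - γ) * N v ≤ g v →
      ∀ w, |g w - c / 2 * (w i - w j)| ≤ η * ‖w‖ := by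
    intro i j hij g v hg hv hgv w
    have h1 : (1 - γf (i, j)) * N v ≤ g v := by
      refine le_trans ?_ hgv
      have := hγle (i, j)
      nlinarith [isnorm_nonneg hN v]
    have := hγfP (i, j) hij g v hg (hv.trans (hγle (i, j))) h1 w
    rwa [hcc i j hij] at this
  -- choice of R
  set δ : ℝ := γ / 2 with hδdef
  have hδ0 : 0 < δ := by positivity
  have hδ18 : δ ≤ 1/8 := by rw [hδdef]; linarith
  have h1δ : 0 < 1 - δ := by linarith
  refine ⟨(1 - δ)⁻¹, ?_, ?_⟩
  · rw [lt_inv_comm₀ one_pos h1δ]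
    simp only [inv_one]
    linarith
  intro M hM hsand
  have hMN : ∀ x, M x ≤ N x := fun x => (hsand x).1
  have hMlow : ∀ x, (1 - δ) * N x ≤ M x := by
    intro x
    have h := (hsand x).2
    have hM0 : 0 ≤ M x := isnorm_nonneg hM x
    calc (1 - δ) * N x ≤ (1 - δ) * ((1 - δ)⁻¹ * M x) := by
          refine mul_le_mul_of_nonneg_left ?_ h1δ.le
          exact h
      _ = M x := by field_simp
  set d : ℝ := c * (2 - δ) / 2 with hddef
  have hd0 : 0 < d := by rw [hddef]; nlinarith
  have hMee : ∀ i j : Fin n, i ≠ j → |M (ee i - ee j) - d| ≤ c * δ / 2 := by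
    intro i j hij
    have hup : M (ee i - ee j) ≤ c := (hcc i j hij) ▸ hMN _
    have hdn : (1 - δ) * c ≤ M (ee i - ee j) := by
      have := hMlow (ee i - ee j)
      rwa [hcc i j hij] at this
    rw [abs_le, hddef]
    constructor <;> nlinarith
  set ρ : ℝ := c * γ / 2 with hρdef
  have hρ0 : 0 < ρ := by positivity
  -- the iteration
  set pt : (Fin n → Fin n → ℝ) → (Fin n → Fin n → ℝ) :=
    fun t i m => ee i m + (if m = i then 0 else -(t i m) / c) with hptdef
  set Hm : (Fin n → Fin n → ℝ) → (Fin n → Fin n → ℝ) :=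
    fun p i j => if i = j then 0 else M (p i - p j) - d with hHmdef
  set G : (Fin n → Fin n → ℝ) → (Fin n → Fin n → ℝ) :=
    fun t => t - Hm (pt t) with hGdef
  set D : Set (Fin n → Fin n → ℝ) :=
    {t | (∀ i j, t i j = t j i) ∧ (∀ i, t i i = 0) ∧ ‖t‖ ≤ ρ} with hDdef
  -- points stay near the base configuration
  have habsdiv : ∀ (t : Fin n → Fin n → ℝ) (ht : ‖t‖ ≤ ρ) (a b : Fin n),
      |(if b = a then (0:ℝ) else -(t a b)/c)| ≤ ρ / c := by
    intro t ht a b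
    split_ifs with h
    · simp only [abs_zero]; positivity
    · rw [abs_div, abs_neg, abs_of_pos hc0]
      exact (div_le_div_iff_of_pos_right hc0).2 ((entry_abs_le t a b).trans ht)
  have hball : ∀ t ∈ D, ∀ i j : Fin n, i ≠ j →
      ‖(pt t i - pt t j) - (ee i - ee j)‖ ≤ γ := by
    intro t ht i j hij
    rw [pi_norm_le_iff_of_nonneg hγ0.le]
    intro m
    have e1 : (pt t i - pt t j - (ee i - ee j)) m
        = (if m = i then 0 else -(t i m)/c) - (if m = j then 0 else -(t j m)/c) := by
      simp only [hptdef, Pi.sub_apply]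
      ring
    rw [Real.norm_eq_abs, e1]
    refine (abs_sub _ _).trans ?_
    have b1 := habsdiv t ht.2.2 i m
    have b2 := habsdiv t ht.2.2 j m
    have : ρ / c + ρ / c = γ := by rw [hρdef]; field_simp; ring
    linarith
  -- nonvanishing near the base configuration
  have hnz : ∀ (i j : Fin n), i ≠ j → ∀ u : Fin n → ℝ,
      ‖u - (ee i - ee j)‖ ≤ γ → u ≠ 0 := by
    intro i j hij u hu h0
    rw [h0, zero_sub, norm_neg] at hu
    have h1 : |(ee i - ee j) i| ≤ ‖ee i - ee j‖ := by
      simpa using norm_le_pi_norm (ee i - ee j) i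
    have h2 : (ee i - ee j) i = 1 := by simp [ee, hij]
    rw [h2, abs_one] at h1
    linarith
  -- the key approximate-linearity estimate
  have hdiff : ∀ t ∈ D, ∀ t' ∈ D, ∀ i j : Fin n, i ≠ j →
      |(M (pt t i - pt t j) - M (pt t' i - pt t' j)) - (t i j - t' i j)|
        ≤ 1/4 * ‖t - t'‖ := by
    intro t ht t' ht' i j hij
    set u : Fin n → ℝ := pt t i - pt t j with hu_def
    set u' : Fin n → ℝ := pt t' i - pt t' j with hu'_def
    have hu : ‖u - (ee i - ee j)‖ ≤ γ := hball t ht i j hij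
    have hu' : ‖u' - (ee i - ee j)‖ ≤ γ := hball t' ht' i j hij
    have hune : u ≠ 0 := hnz i j hij u hu
    have hu'ne : u' ≠ 0 := hnz i j hij u' hu'
    -- the linear part identity
    have hui : (u - u') i = (t j i - t' j i)/c := by
      simp only [hu_def, hu'_def, hptdef, Pi.sub_apply, ee, eq_self_iff_true, if_true,
        if_neg hij]
      ring
    have huj : (u - u') j = -((t i j - t' i j)/c) := by
      simp only [hu_def, hu'_def, hptdef, Pi.sub_apply, ee, eq_self_iff_true, if_true,
        if_neg (Ne.symm hij)]
      ring
    have hid : c/2 * ((u - u') i - (u - u') j) = t i j - t' i j := by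
      rw [hui, huj, ht.1 j i, ht'.1 j i]
      field_simp
      ring
    -- the norm bound
    have hnorm : ‖u - u'‖ ≤ 2/c * ‖t - t'‖ := by
      rw [pi_norm_le_iff_of_nonneg (by positivity)]
      intro m
      have e1 : (u - u') m
          = (if m = i then 0 else -((t - t') i m)/c)
            - (if m = j then 0 else -((t - t') j m)/c) := by
        simp only [hu_def, hu'_def, hptdef, Pi.sub_apply]
        split_ifs <;> ring
      rw [Real.norm_eq_abs, e1]
      refine (abs_sub _ _).trans ?_
      have b1 : |(if m = i then (0:ℝ) else -((t - t') i m)/c)| ≤ ‖t - t'‖ / c := by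
        split_ifs with h
        · simp only [abs_zero]; positivity
        · rw [abs_div, abs_neg, abs_of_pos hc0]
          exact (div_le_div_iff_of_pos_right hc0).2 (entry_abs_le (t - t') i m)
      have b2 : |(if m = j then (0:ℝ) else -((t - t') j m)/c)| ≤ ‖t - t'‖ / c := by
        split_ifs with h
        · simp only [abs_zero]; positivity
        · rw [abs_div, abs_neg, abs_of_pos hc0]
          exact (div_le_div_iff_of_pos_right hc0).2 (entry_abs_le (t - t') j m)
      have : 2/c * ‖t - t'‖ = ‖t - t'‖/c + ‖t - t'‖/c := by field_simp; ring
      linarith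
    have hηnorm : η * ‖u - u'‖ ≤ 1/4 * ‖t - t'‖ := by
      have h1 : η * ‖u - u'‖ ≤ η * (2/c * ‖t - t'‖) :=
        mul_le_mul_of_nonneg_left hnorm hη.le
      have h2 : η * (2/c * ‖t - t'‖) = 1/4 * ‖t - t'‖ := by
        rw [hηdef]; field_simp; ring
      linarith
    -- lower bound via support functional at u'
    obtain ⟨g, hg, hgu'⟩ := exists_support hM hu'ne
    have hgN : ∀ z, g z ≤ N z := fun z => (hg z).trans (hMN z)
    have hδγ : δ ≤ γ := by rw [hδdef]; linarith
    have hglow : (1 - γ) * N u' ≤ g u' := by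
      rw [hgu']
      refine le_trans ?_ (hMlow u')
      have h8 := isnorm_nonneg hN u'
      nlinarith [h8, hδγ]
    have hkey := (abs_le.1 (hKEY i j hij g u' hgN hu' hglow (u - u'))).1
    have hmapsub : g (u - u') = g u - g u' := map_sub g u u'
    have hlow : c/2 * ((u-u') i - (u-u') j) - η * ‖u - u'‖ ≤ M u - M u' := by
      have h1 : g u ≤ M u := hg u
      linarith
    -- upper bound via support functional at u
    obtain ⟨g2, hg2, hg2u⟩ := exists_support hM hune
    have hg2N : ∀ z, g2 z ≤ N z := fun z => (hg2 z).trans (hMN z)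
    have hg2low : (1 - γ) * N u ≤ g2 u := by
      rw [hg2u]
      refine le_trans ?_ (hMlow u)
      have h8 := isnorm_nonneg hN u
      nlinarith [h8, hδγ]
    have hkey2 := (abs_le.1 (hKEY i j hij g2 u hg2N hu hg2low (u - u'))).2
    have hmapsub2 : g2 (u - u') = g2 u - g2 u' := map_sub g2 u u'
    have hup : M u - M u' ≤ c/2 * ((u-u') i - (u-u') j) + η * ‖u - u'‖ := by
      have h1 : g2 u' ≤ M u' := hg2 u'
      linarith
    rw [abs_le]
    constructor
    · rw [← hid]; linarith
    · rw [← hid]; linarith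
  -- the Lipschitz estimate for the iteration map
  have hGsub : ∀ t t', G t - G t' = (t - t') - (Hm (pt t) - Hm (pt t')) := by
    intro t t'
    simp only [hGdef]
    abel
  have hlip : ∀ t ∈ D, ∀ t' ∈ D, dist (G t) (G t') ≤ 1/2 * dist (t : Fin n → Fin n → ℝ) t' := by
    intro t ht t' ht'
    rw [dist_pi_le_iff (by positivity)]
    intro i
    rw [dist_pi_le_iff (by positivity)]
    intro j
    rw [Real.dist_eq]
    have hGe : G t i j - G t' i j
        = (t i j - t' i j) - (Hm (pt t) i j - Hm (pt t') i j) := by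
      simp only [hGdef, Pi.sub_apply]; ring
    by_cases h : i = j
    · subst h
      have e0 : Hm (pt t) i i = 0 := by simp [hHmdef]
      have e0' : Hm (pt t') i i = 0 := by simp [hHmdef]
      rw [hGe, e0, e0', ht.2.1 i, ht'.2.1 i]
      simp only [sub_zero, sub_self, abs_zero]
      positivity
    · have e0 : Hm (pt t) i j = M (pt t i - pt t j) - d := by simp [hHmdef, h]
      have e0' : Hm (pt t') i j = M (pt t' i - pt t' j) - d := by simp [hHmdef, h]
      rw [hGe, e0, e0']
      have := hdiff t ht t' ht' i j h
      have habs : |(t i j - t' i j) - (M (pt t i - pt t j) - d - (M (pt t' i - pt t' j) - d))|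
          = |(M (pt t i - pt t j) - M (pt t' i - pt t' j)) - (t i j - t' i j)| := by
        rw [← abs_neg]; congr 1; ring
      rw [habs]
      refine this.trans ?_
      rw [dist_eq_norm]
      linarith [norm_nonneg (t - t')]
  -- the iteration maps D to itself
  have hpt0 : pt 0 = fun i => ee i := by
    funext i m
    simp [hptdef]
  have hG0 : ∀ i j : Fin n, |G 0 i j| ≤ c * δ / 2 := by
    intro i j
    by_cases h : i = j
    · subst h
      have e0 : G 0 i i = 0 := by simp [hGdef, hHmdef]
      rw [e0, abs_zero]
      positivity
    · have e0 : G 0 i j = -(M (ee i - ee j) - d) := by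
        simp only [hGdef, Pi.sub_apply, Pi.zero_apply, hHmdef, if_neg h, hpt0]
        ring
      rw [e0, abs_neg]
      exact hMee i j h
  have h0D : (0 : Fin n → Fin n → ℝ) ∈ D := by
    refine ⟨fun i j => rfl, fun i => rfl, ?_⟩
    simp only [norm_zero]
    exact hρ0.le
  have hmaps : ∀ t ∈ D, G t ∈ D := by
    intro t ht
    refine ⟨?_, ?_, ?_⟩
    · intro i j
      by_cases h : i = j
      · subst h; rfl
      · have e0 : Hm (pt t) i j = M (pt t i - pt t j) - d := by simp [hHmdef, h]
        have e0' : Hm (pt t) j i = M (pt t j - pt t i) - d := by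
          simp [hHmdef, Ne.symm h]
        have hMsym : M (pt t i - pt t j) = M (pt t j - pt t i) := by
          rw [show pt t i - pt t j = -(pt t j - pt t i) by abel, isnorm_neg hM]
        simp only [hGdef, Pi.sub_apply]
        rw [e0, e0', ht.1 i j, hMsym]
    · intro i
      have e0 : Hm (pt t) i i = 0 := by simp [hHmdef]
      simp only [hGdef, Pi.sub_apply, e0, ht.2.1 i]
      ring
    · have h1 : dist (G t) (G 0) ≤ 1/2 * dist t 0 := hlip t ht 0 h0D
      have h2 : ‖G 0‖ ≤ c * δ / 2 := by
        rw [pi_norm_le_iff_of_nonneg (by positivity)]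
        intro i
        rw [pi_norm_le_iff_of_nonneg (by positivity)]
        intro j
        rw [Real.norm_eq_abs]
        exact hG0 i j
      have h3 : ‖G t‖ ≤ ‖G t - G 0‖ + ‖G 0‖ := by
        have := norm_sub_norm_le (G t) (G 0)
        linarith [norm_nonneg (G t - G 0)]
      rw [dist_eq_norm] at h1
      rw [dist_eq_norm, sub_zero] at h1
      have h4 : ‖t‖ ≤ ρ := ht.2.2
      have h5 : c * δ / 2 + 1/2 * ρ = ρ := by rw [hρdef, hδdef]; ring
      linarith
  -- D is a closed, nonempty set
  have hD_closed : IsClosed D := by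
    have e : D = (⋂ (i : Fin n) (j : Fin n), {t : Fin n → Fin n → ℝ | t i j = t j i}) ∩
        ((⋂ (i : Fin n), {t : Fin n → Fin n → ℝ | t i i = 0}) ∩
          Metric.closedBall 0 ρ) := by
      ext t
      simp only [hDdef, Set.mem_setOf_eq, Set.mem_inter_iff, Set.mem_iInter,
        Metric.mem_closedBall, dist_zero_right]
    rw [e]
    refine IsClosed.inter ?_ (IsClosed.inter ?_ Metric.isClosed_closedBall)
    · exact isClosed_iInter fun i => isClosed_iInter fun j =>
        isClosed_eq ((continuous_apply j).comp (continuous_apply i))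
          ((continuous_apply i).comp (continuous_apply j))
    · exact isClosed_iInter fun i =>
        isClosed_eq ((continuous_apply i).comp (continuous_apply i)) continuous_const
  haveI : CompleteSpace D := IsClosed.completeSpace_coe (hs := hD_closed)
  haveI : Nonempty D := ⟨⟨0, h0D⟩⟩
  set Gs : D → D := fun t => ⟨G t.1, hmaps t.1 t.2⟩ with hGs
  have hcontr : ContractingWith (1/2 : NNReal) Gs := by
    constructor
    · rw [← NNReal.coe_lt_coe]; norm_num
    · refine LipschitzWith.of_dist_le_mul fun x y => ?_
      have h1 := hlip x.1 x.2 y.1 y.2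
      have h2 : ((1/2 : NNReal) : ℝ) = 1/2 := by norm_num
      rw [Subtype.dist_eq, Subtype.dist_eq, h2]
      exact h1
  set tst : D := ContractingWith.fixedPoint Gs hcontr with htst
  have hfix : Gs tst = tst := hcontr.fixedPoint_isFixedPt
  have hfix' : G tst.1 = tst.1 := congrArg Subtype.val hfix
  refine ⟨pt tst.1, d, hd0, ?_⟩
  intro i j hij
  have hent := congrFun (congrFun hfix' i) j
  have e0 : Hm (pt tst.1) i j = M (pt tst.1 i - pt tst.1 j) - d := by
    simp [hHmdef, hij]
  simp only [hGdef, Pi.sub_apply, e0] at hent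
  linarith
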